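/- Let n ≥ 2, assume condition (ON), and let S, W be two adjacent vertices of G(V) (so S ≠ W and S ⊥ W). Then there is a bijection between the set {T : T is a 1-dimensional non-degenerate subspace of V, T ≤ S^⊥, and T + W is degenerate} and the set {v ∈ V : v ≠ 0, v ∈ (S + W)^⊥, and Ψ(v,v) = 0}. -/

import Mathlib

namespace FramePaper

variable {K : Type*} [Field K]

/-- The standard Hermitian form `Ψ(v,w) = ∑ i, v i * τ (w i)` on `Fin n → K`. -/
def Psi (τ : K → K) {n : ℕ} (v w : Fin n → K) : K :=
  ∑ i, v i * τ (w i)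

lemma Psi_add_left (τ : K → K) {n : ℕ} (a b w : Fin n → K) :
    Psi τ (a + b) w = Psi τ a w + Psi τ b w := by
  simp [Psi, add_mul, Finset.sum_add_distrib]

lemma Psi_smul_left (τ : K → K) {n : ℕ} (c : K) (a w : Fin n → K) :
    Psi τ (c • a) w = c * Psi τ a w := by
  simp [Psi, Finset.mul_sum, mul_assoc]

/-- The orthogonal complement `S^⊥ = {v | ∀ s ∈ S, Ψ(v,s) = 0}`. -/
def perp (τ : K → K) {n : ℕ} (S : Submodule K (Fin n → K)) :
    Submodule K (Fin n → K) where
  carrier := {v | ∀ s ∈ S, Psi τ v s = 0}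
  add_mem' := by
    intro a b ha hb
    show ∀ s ∈ S, Psi τ (a + b) s = 0
    intro s hs
    rw [Psi_add_left, ha s hs, hb s hs, add_zero]
  zero_mem' := by
    show ∀ s ∈ S, Psi τ 0 s = 0
    intro s hs
    simp [Psi]
  smul_mem' := by
    intro c a ha
    show ∀ s ∈ S, Psi τ (c • a) s = 0
    intro s hs
    rw [Psi_smul_left, ha s hs, mul_zero]

/-- A subspace `S` is non-degenerate iff `S ⊓ S^⊥ = ⊥`. -/
def Nondeg (τ : K → K) {n : ℕ} (S : Submodule K (Fin n → K)) : Prop :=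
  S ⊓ perp τ S = ⊥

/-- Vertices of `G(V)`: the `1`-dimensional non-degenerate subspaces. -/
def IsVertex (τ : K → K) {n : ℕ} (S : Submodule K (Fin n → K)) : Prop :=
  Module.finrank K S = 1 ∧ Nondeg τ S

/-- The graph `G(V)` on the `1`-dimensional non-degenerate subspaces of `V = Fin n → K`,
with `S, W` adjacent iff `S ≠ W` and `Ψ(s,w) = 0` for all `s ∈ S`, `w ∈ W`. -/
def FrameGraph (τ : K →+* K) (hτ2 : ∀ x, τ (τ x) = x) (n : ℕ) :
    SimpleGraph {S : Submodule K (Fin n → K) // IsVertex (⇑τ) S} where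
  Adj S W := S ≠ W ∧ ∀ s ∈ S.1, ∀ w ∈ W.1, Psi (⇑τ) s w = 0
  symm := by
    constructor
    rintro S W ⟨hne, h⟩
    refine ⟨hne.symm, fun w hw s hs => ?_⟩
    have key : Psi (⇑τ) w s = τ (Psi (⇑τ) s w) := by
      simp only [Psi, map_sum, map_mul, hτ2]
      exact Finset.sum_congr rfl fun i _ => mul_comm _ _
    rw [key, h s hs w hw, map_zero]
  loopless := ⟨fun S h => h.1 rfl⟩


section helpers
variable (τ : K →+* K) {n : ℕ}

lemma Psi_add_right (v a b : Fin n → K) :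
    Psi ⇑τ v (a + b) = Psi ⇑τ v a + Psi ⇑τ v b := by
  simp [Psi, mul_add, Finset.sum_add_distrib]

lemma Psi_smul_right (c : K) (v w : Fin n → K) :
    Psi ⇑τ v (c • w) = τ c * Psi ⇑τ v w := by
  simp [Psi, map_mul, Finset.mul_sum, mul_left_comm]

lemma Psi_sub_left (a b w : Fin n → K) :
    Psi ⇑τ (a - b) w = Psi ⇑τ a w - Psi ⇑τ b w := by
  simp [Psi, sub_mul, Finset.sum_sub_distrib]

lemma Psi_sub_right (v a b : Fin n → K) :
    Psi ⇑τ v (a - b) = Psi ⇑τ v a - Psi ⇑τ v b := by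
  simp [Psi, mul_sub, Finset.sum_sub_distrib]

lemma Psi_conj (hτ2 : ∀ x, τ (τ x) = x) (v w : Fin n → K) :
    τ (Psi ⇑τ v w) = Psi ⇑τ w v := by
  simp only [Psi, map_sum, map_mul, hτ2]
  exact Finset.sum_congr rfl fun i _ => mul_comm _ _

end helpers

section aux
variable (τ : K →+* K) {n : ℕ}

lemma exists_span {X : Submodule K (Fin n → K)} (h : Module.finrank K X = 1) :
    ∃ t : Fin n → K, t ≠ 0 ∧ X = Submodule.span K {t} := by
  obtain ⟨v, hv0, hgen⟩ := finrank_eq_one_iff'.mp h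
  refine ⟨(v : Fin n → K), by simpa using hv0, le_antisymm ?_ ?_⟩
  · intro x hx
    obtain ⟨c, hc⟩ := hgen ⟨x, hx⟩
    exact Submodule.mem_span_singleton.mpr ⟨c, congrArg Subtype.val hc⟩
  · rw [Submodule.span_singleton_le_iff_mem]; exact v.2

lemma nondeg_span_iff {t : Fin n → K} (ht : t ≠ 0) :
    Nondeg ⇑τ (Submodule.span K {t}) ↔ Psi ⇑τ t t ≠ 0 := by
  constructor
  · intro h hα
    have h' : Submodule.span K {t} ⊓ perp ⇑τ (Submodule.span K {t}) = ⊥ := h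
    have htm : t ∈ Submodule.span K {t} ⊓ perp ⇑τ (Submodule.span K {t}) := by
      refine ⟨Submodule.mem_span_singleton_self t, ?_⟩
      intro s hs
      obtain ⟨c, rfl⟩ := Submodule.mem_span_singleton.mp hs
      rw [Psi_smul_right, hα, mul_zero]
    rw [h'] at htm
    exact ht ((Submodule.mem_bot K).mp htm)
  · intro hα
    rw [Nondeg, eq_bot_iff]
    rintro x ⟨hx1, hx2⟩
    obtain ⟨c, rfl⟩ := Submodule.mem_span_singleton.mp hx1
    have h0 := hx2 t (Submodule.mem_span_singleton_self t)
    rw [Psi_smul_left] at h0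
    rcases mul_eq_zero.mp h0 with h | h
    · simp [h]
    · exact absurd h hα

lemma not_nondeg_of_mem {X : Submodule K (Fin n → K)} {v : Fin n → K}
    (hv0 : v ≠ 0) (h1 : v ∈ X) (h2 : v ∈ perp ⇑τ X) : ¬ Nondeg ⇑τ X := by
  intro h
  have h' : X ⊓ perp ⇑τ X = ⊥ := h
  exact hv0 ((Submodule.mem_bot K).mp (h' ▸ Submodule.mem_inf.mpr ⟨h1, h2⟩))

lemma exists_of_not_nondeg {X : Submodule K (Fin n → K)} (h : ¬ Nondeg ⇑τ X) :
    ∃ v : Fin n → K, v ≠ 0 ∧ v ∈ X ∧ v ∈ perp ⇑τ X := by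
  have h' : X ⊓ perp ⇑τ X ≠ ⊥ := h
  obtain ⟨v, hv, hv0⟩ := (Submodule.ne_bot_iff _).mp h'
  exact ⟨v, hv0, (Submodule.mem_inf.mp hv).1, (Submodule.mem_inf.mp hv).2⟩

end aux

/-- For `n ≥ 2`, under condition (ON), if `S, W` are adjacent vertices
of `G(V)` (so `S ≠ W` and `S ⊥ W`), then there is a bijection between the set of vertices
`T ≤ S^⊥` with `T + W` degenerate, and the set of nonzero isotropic vectors of
`(S + W)^⊥`. -/


theorem statement18 (τ : K →+* K) (hτne : (⇑τ : K → K) ≠ id) (hτ2 : ∀ x, τ (τ x) = x)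
    (n : ℕ) (hn : 2 ≤ n)
    (hON : ∀ v : Fin n → K, ∃ x : K, Psi (⇑τ) v v = x * τ x)
    (S W : Submodule K (Fin n → K))
    (hS : IsVertex (⇑τ) S) (hW : IsVertex (⇑τ) W) (hne : S ≠ W)
    (hperp : ∀ s ∈ S, ∀ w ∈ W, Psi (⇑τ) s w = 0) :
    Nonempty
      ({T : Submodule K (Fin n → K) //
          IsVertex (⇑τ) T ∧ T ≤ perp (⇑τ) S ∧ ¬ Nondeg (⇑τ) (T ⊔ W)} ≃
        {v : Fin n → K // v ≠ 0 ∧ v ∈ perp (⇑τ) (S ⊔ W) ∧ Psi (⇑τ) v v = 0}) := by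

  classical
  obtain ⟨w, hw0, hWsp⟩ := exists_span hW.1
  have hwW : w ∈ W := hWsp ▸ Submodule.mem_span_singleton_self w
  have hδτ : τ (Psi ⇑τ w w) = Psi ⇑τ w w := Psi_conj τ hτ2 w w
  have hδ : Psi ⇑τ w w ≠ 0 := (nondeg_span_iff τ hw0).mp (hWsp ▸ hW.2)
  have hwS : ∀ s ∈ S, Psi ⇑τ w s = 0 := fun s hs => by
    rw [← Psi_conj τ hτ2 s w, hperp s hs w hwW, map_zero]
  have hmain : ∀ v : Fin n → K, v ≠ 0 → v ∈ perp ⇑τ (S ⊔ W) → Psi ⇑τ v v = 0 →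
      IsVertex ⇑τ (Submodule.span K {v + w}) ∧
      Submodule.span K {v + w} ≤ perp ⇑τ S ∧
      ¬ Nondeg ⇑τ (Submodule.span K {v + w} ⊔ W) := by
    intro v hv0 hvp hviso
    have hvS : ∀ s ∈ S, Psi ⇑τ v s = 0 := fun s hs => hvp s (Submodule.mem_sup_left hs)
    have hvw : Psi ⇑τ v w = 0 := hvp w (Submodule.mem_sup_right hwW)
    have hwv : Psi ⇑τ w v = 0 := by rw [← Psi_conj τ hτ2 v w, hvw, map_zero]
    have hkey : Psi ⇑τ (v + w) (v + w) = Psi ⇑τ w w := by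
      rw [Psi_add_left, Psi_add_right, Psi_add_right, hviso, hvw, hwv]
      ring
    have hvw0 : v + w ≠ 0 := by
      intro h
      apply hδ
      rw [← hkey, h]
      simp [Psi]
    refine ⟨⟨finrank_span_singleton hvw0,
      (nondeg_span_iff τ hvw0).mpr (by rw [hkey]; exact hδ)⟩, ?_, ?_⟩
    · rw [Submodule.span_singleton_le_iff_mem]
      intro s hs
      rw [Psi_add_left, hvS s hs, hwS s hs, add_zero]
    · refine not_nondeg_of_mem τ hv0 ?_ ?_
      · exact Submodule.mem_sup.mpr ⟨v + w, Submodule.mem_span_singleton_self _,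
          -w, neg_mem hwW, by ring⟩
      · intro s hs
        obtain ⟨y, hy, z, hz, rfl⟩ := Submodule.mem_sup.mp hs
        obtain ⟨a, rfl⟩ := Submodule.mem_span_singleton.mp hy
        obtain ⟨b, rfl⟩ :=
          Submodule.mem_span_singleton.mp (hWsp ▸ hz : z ∈ Submodule.span K {w})
        rw [Psi_add_right, Psi_smul_right, Psi_smul_right, Psi_add_right, hviso, hvw]
        ring
  let f : {v : Fin n → K // v ≠ 0 ∧ v ∈ perp (⇑τ) (S ⊔ W) ∧ Psi (⇑τ) v v = 0} →
      {T : Submodule K (Fin n → K) //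
        IsVertex (⇑τ) T ∧ T ≤ perp (⇑τ) S ∧ ¬ Nondeg (⇑τ) (T ⊔ W)} :=
    fun v => ⟨Submodule.span K {v.1 + w}, hmain v.1 v.2.1 v.2.2.1 v.2.2.2⟩
  refine ⟨(Equiv.ofBijective f ⟨?_, ?_⟩).symm⟩
  · -- injectivity
    rintro ⟨v, hv0, hvp, hviso⟩ ⟨v', hv'0, hv'p, hv'iso⟩ hff
    have hsp : Submodule.span K {v + w} = Submodule.span K {v' + w} :=
      congrArg Subtype.val hff
    have hvw : Psi ⇑τ v w = 0 := hvp w (Submodule.mem_sup_right hwW)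
    have hv'w : Psi ⇑τ v' w = 0 := hv'p w (Submodule.mem_sup_right hwW)
    obtain ⟨c, hc⟩ := Submodule.mem_span_singleton.mp
      (hsp ▸ Submodule.mem_span_singleton_self (v + w))
    have h1 : Psi ⇑τ (v + w) w = Psi ⇑τ w w := by rw [Psi_add_left, hvw, zero_add]
    have h2 : Psi ⇑τ (c • (v' + w)) w = c * Psi ⇑τ w w := by
      rw [Psi_smul_left, Psi_add_left, hv'w, zero_add]
    have hc1 : c = 1 := by
      refine mul_right_cancel₀ hδ ?_
      rw [one_mul, ← h2, hc, h1]
    rw [hc1, one_smul] at hc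
    exact Subtype.ext (by simpa using hc.symm)
  · -- surjectivity
    rintro ⟨T, ⟨hT1, hTnd⟩, hTS, hTWdeg⟩
    obtain ⟨t, ht0, hTsp⟩ := exists_span hT1
    have htT : t ∈ T := hTsp ▸ Submodule.mem_span_singleton_self t
    have hα : Psi ⇑τ t t ≠ 0 := (nondeg_span_iff τ ht0).mp (hTsp ▸ hTnd)
    have hwt : Psi ⇑τ w t = τ (Psi ⇑τ t w) := (Psi_conj τ hτ2 t w).symm
    have htS : ∀ s ∈ S, Psi ⇑τ t s = 0 := fun s hs => hTS htT s hs
    have hγ : Psi ⇑τ t w ≠ 0 := by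
      intro hγ0
      apply hTWdeg
      show (T ⊔ W) ⊓ perp ⇑τ (T ⊔ W) = ⊥
      rw [eq_bot_iff]
      rintro x ⟨hx1, hx2⟩
      obtain ⟨y, hy, z, hz, rfl⟩ := Submodule.mem_sup.mp hx1
      obtain ⟨a, rfl⟩ :=
        Submodule.mem_span_singleton.mp (hTsp ▸ hy : y ∈ Submodule.span K {t})
      obtain ⟨b, rfl⟩ :=
        Submodule.mem_span_singleton.mp (hWsp ▸ hz : z ∈ Submodule.span K {w})
      have e1 := hx2 t (Submodule.mem_sup_left htT)
      have e2 := hx2 w (Submodule.mem_sup_right hwW)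
      rw [Psi_add_left, Psi_smul_left, Psi_smul_left, hwt, hγ0, map_zero, mul_zero,
        add_zero] at e1
      rw [Psi_add_left, Psi_smul_left, Psi_smul_left, hγ0, mul_zero, zero_add] at e2
      have ha : a = 0 := by
        rcases mul_eq_zero.mp e1 with h | h
        · exact h
        · exact absurd h hα
      have hb : b = 0 := by
        rcases mul_eq_zero.mp e2 with h | h
        · exact h
        · exact absurd h hδ
      rw [ha, hb]
      simp
    have hτγ : τ (Psi ⇑τ t w) ≠ 0 := fun h => hγ (by rw [← hτ2 (Psi ⇑τ t w), h, map_zero])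
    obtain ⟨u, hu0, huX, huP⟩ := exists_of_not_nondeg τ hTWdeg
    obtain ⟨y, hy, z, hz, rfl⟩ := Submodule.mem_sup.mp huX
    obtain ⟨a, rfl⟩ :=
      Submodule.mem_span_singleton.mp (hTsp ▸ hy : y ∈ Submodule.span K {t})
    obtain ⟨b, rfl⟩ :=
      Submodule.mem_span_singleton.mp (hWsp ▸ hz : z ∈ Submodule.span K {w})
    have e1 := huP t (Submodule.mem_sup_left htT)
    have e2 := huP w (Submodule.mem_sup_right hwW)
    rw [Psi_add_left, Psi_smul_left, Psi_smul_left, hwt] at e1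
    rw [Psi_add_left, Psi_smul_left, Psi_smul_left] at e2
    have hb : b ≠ 0 := by
      intro hb0
      rw [hb0, zero_mul, add_zero] at e2
      have ha : a = 0 := by
        rcases mul_eq_zero.mp e2 with h | h
        · exact h
        · exact absurd h hγ
      apply hu0
      rw [ha, hb0]
      simp
    have key : Psi ⇑τ t t * Psi ⇑τ w w = Psi ⇑τ t w * τ (Psi ⇑τ t w) := by
      have h0 : b * (Psi ⇑τ t w * τ (Psi ⇑τ t w) - Psi ⇑τ t t * Psi ⇑τ w w) = 0 := by
        linear_combination Psi ⇑τ t w * e1 - Psi ⇑τ t t * e2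
      have h1 := (mul_eq_zero.mp h0).resolve_left hb
      linear_combination -h1
    set lam := Psi ⇑τ w w / Psi ⇑τ t w with hlamdef
    have hlam0 : lam ≠ 0 := div_ne_zero hδ hγ
    have hvw_eq : (lam • t - w) + w = lam • t := sub_add_cancel _ _
    have hv0 : lam • t - w ≠ 0 := by
      intro h
      have hw_eq : lam • t = w := sub_eq_zero.mp h
      have hWT : W ≤ T := by
        rw [hWsp, Submodule.span_singleton_le_iff_mem, ← hw_eq]
        exact Submodule.smul_mem _ _ htT
      apply hTWdeg
      rw [sup_eq_left.mpr hWT]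
      exact hTnd
    have hvw : Psi ⇑τ (lam • t - w) w = 0 := by
      rw [Psi_sub_left, Psi_smul_left, hlamdef, div_mul_cancel₀ _ hγ, sub_self]
    have hvperp : lam • t - w ∈ perp ⇑τ (S ⊔ W) := by
      intro s hs
      obtain ⟨y, hy, z, hz, rfl⟩ := Submodule.mem_sup.mp hs
      obtain ⟨b', rfl⟩ :=
        Submodule.mem_span_singleton.mp (hWsp ▸ hz : z ∈ Submodule.span K {w})
      rw [Psi_add_right, Psi_smul_right, hvw, mul_zero, add_zero, Psi_sub_left,
        Psi_smul_left, htS y hy, hwS y hy]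
      ring
    have hviso : Psi ⇑τ (lam • t - w) (lam • t - w) = 0 := by
      have hvt : Psi ⇑τ (lam • t - w) t = lam * Psi ⇑τ t t - τ (Psi ⇑τ t w) := by
        rw [Psi_sub_left, Psi_smul_left, hwt]
      have hstep : Psi ⇑τ (lam • t - w) (lam • t - w) =
          τ lam * Psi ⇑τ (lam • t - w) t := by
        rw [Psi_sub_right, Psi_smul_right, hvw, sub_zero]
      have hinner : lam * Psi ⇑τ t t - τ (Psi ⇑τ t w) = 0 := by
        rw [hlamdef]
        field_simp
        linear_combination key
      rw [hstep, hvt, hinner, mul_zero]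
    refine ⟨⟨lam • t - w, hv0, hvperp, hviso⟩, Subtype.ext ?_⟩
    show Submodule.span K {(lam • t - w) + w} = T
    rw [hvw_eq, Submodule.span_singleton_smul_eq (isUnit_iff_ne_zero.mpr hlam0) t, ← hTsp]

end FramePaper
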